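/- Let τ be a rearrangement of dyadic intervals such that T h_I = h_{τ(I)} extends to a bounded operator on dyadic BMO with norm ‖T‖. Then for every collection E of dyadic intervals, ⟦τ(E)⟧ ≤ ‖T‖² ⟦E⟧, where ⟦·⟧ denotes the Carleson constant. -/

import Mathlib

open MeasureTheory

/-- A dyadic interval `[k/2^n, (k+1)/2^n)` of `[0,1)`. -/
structure DI where
  n : ℕ
  k : ℕ
  hk : k < 2 ^ n

namespace DI

/-- The underlying set of a dyadic interval. -/
def carrier (I : DI) : Set ℝ := Set.Ico ((I.k : ℝ) / 2 ^ I.n) ((I.k + 1 : ℝ) / 2 ^ I.n)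

/-- The length `|I| = 2^{-n}` of a dyadic interval. -/
noncomputable def len (I : DI) : ENNReal := ENNReal.ofReal ((2 : ℝ)⁻¹ ^ I.n)

end DI

/-- The Carleson sum `∑_{I ∈ L, I ⊆ J} |I|`. -/
noncomputable def carlesonSum (L : Set DI) (J : DI) : ENNReal :=
  ∑' I : {I : DI // I ∈ L ∧ I.carrier ⊆ J.carrier}, I.1.len

/-- `L` satisfies the `M`-Carleson condition. -/
def CarlesonLE (L : Set DI) (M : ENNReal) : Prop :=
  ∀ J : DI, carlesonSum L J ≤ M * J.len

/-- The Carleson constant `⟦L⟧ = sup_J (1/|J|) ∑_{I ∈ L, I ⊆ J} |I|`. -/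
noncomputable def carlesonConst (L : Set DI) : ENNReal :=
  ⨆ J : DI, carlesonSum L J / J.len

/-- The square of the dyadic BMO norm of `x = ∑ x_I h_I`,
`‖x‖² = sup_J (1/|J|) ∑_{I ⊆ J} x_I² |I|`, in terms of the Haar coefficients. -/
noncomputable def bmoSq (x : DI → ℝ) : ENNReal :=
  ⨆ J : DI, (∑' I : {I : DI // I.carrier ⊆ J.carrier},
      ENNReal.ofReal ((x I.1) ^ 2) * I.1.len) / J.len

/-- `|L*|`: the Lebesgue measure of the set covered by the collection `L`. -/
noncomputable def covMeas (L : Set DI) : ENNReal := volume (⋃ I ∈ L, I.carrier)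

/-- `y` is the coefficient function of `Tx` where `T h_I = h_{τ(I)}` and `x` has
coefficients `x_I`. -/
def HaarCompat (τ : DI → DI) (x y : DI → ℝ) : Prop :=
  (∀ I, y (τ I) = x I) ∧ ∀ J, J ∉ Set.range τ → y J = 0

/-- The maximal elements of a collection of dyadic intervals, under inclusion. -/
def maxSet (S : Set DI) : Set DI :=
  {I | I ∈ S ∧ ∀ K ∈ S, I.carrier ⊆ K.carrier → I = K}

/-- If `T h_I = h_{τ(I)}` is bounded on dyadic BMO (with `C = ‖T‖²`), then
`⟦τ(E)⟧ ≤ ‖T‖² ⟦E⟧` for every collection `E` of dyadic intervals. -/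
theorem stmt9 (τ : DI → DI) (hτ : Function.Injective τ) (C : ENNReal)
    (hT : ∀ x y : DI → ℝ, HaarCompat τ x y → bmoSq y ≤ C * bmoSq x)
    (E : Set DI) :
    carlesonConst (τ '' E) ≤ C * carlesonConst E := by
  classical
  rw [carlesonConst]
  apply iSup_le
  intro J
  set x : DI → ℝ := fun I => if I ∈ E ∧ (τ I).carrier ⊆ J.carrier then 1 else 0 with hx
  set y : DI → ℝ := fun K => if K ∈ τ '' E ∧ K.carrier ⊆ J.carrier then 1 else 0 with hy
  have hcompat : HaarCompat τ x y := by
    constructor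
    · intro I
      simp only [hx, hy, hτ.mem_set_image]
    · intro K hK
      simp only [hy]
      rw [if_neg]
      rintro ⟨⟨I, hI, rfl⟩, -⟩
      exact hK ⟨I, rfl⟩
  have h1 : carlesonSum (τ '' E) J / J.len ≤ bmoSq y := by
    refine le_trans (ENNReal.div_le_div_right ?_ _)
      (le_iSup (fun J : DI => (∑' K : {K : DI // K.carrier ⊆ J.carrier},
        ENNReal.ofReal ((y K.1) ^ 2) * K.1.len) / J.len) J)
    have e1 : carlesonSum (τ '' E) J
        = ∑' K, Set.indicator {K : DI | K ∈ τ '' E ∧ K.carrier ⊆ J.carrier} DI.len K :=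
      tsum_subtype {K : DI | K ∈ τ '' E ∧ K.carrier ⊆ J.carrier} DI.len
    have e2 : (∑' K : {K : DI // K.carrier ⊆ J.carrier},
          ENNReal.ofReal ((y K.1) ^ 2) * K.1.len)
        = ∑' K, Set.indicator {K : DI | K.carrier ⊆ J.carrier}
            (fun K => ENNReal.ofReal ((y K) ^ 2) * K.len) K :=
      tsum_subtype {K : DI | K.carrier ⊆ J.carrier}
        (fun K => ENNReal.ofReal ((y K) ^ 2) * K.len)
    rw [e1, e2]
    apply ENNReal.tsum_le_tsum
    intro K
    by_cases hK : K ∈ {K : DI | K ∈ τ '' E ∧ K.carrier ⊆ J.carrier}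
    · have hK2 : K ∈ {K : DI | K.carrier ⊆ J.carrier} := hK.2
      rw [Set.indicator_of_mem hK, Set.indicator_of_mem hK2]
      have hyK : y K = 1 := if_pos hK
      rw [hyK]
      norm_num
    · rw [Set.indicator_of_notMem hK]
      exact zero_le
  have h2 : bmoSq x ≤ carlesonConst E := by
    apply iSup_le
    intro J'
    refine le_trans (ENNReal.div_le_div_right ?_ _)
      (le_iSup (fun J : DI => carlesonSum E J / J.len) J')
    have e1 : carlesonSum E J'
        = ∑' I, Set.indicator {I : DI | I ∈ E ∧ I.carrier ⊆ J'.carrier} DI.len I :=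
      tsum_subtype {I : DI | I ∈ E ∧ I.carrier ⊆ J'.carrier} DI.len
    have e2 : (∑' I : {I : DI // I.carrier ⊆ J'.carrier},
          ENNReal.ofReal ((x I.1) ^ 2) * I.1.len)
        = ∑' I, Set.indicator {I : DI | I.carrier ⊆ J'.carrier}
            (fun I => ENNReal.ofReal ((x I) ^ 2) * I.len) I :=
      tsum_subtype {I : DI | I.carrier ⊆ J'.carrier}
        (fun I => ENNReal.ofReal ((x I) ^ 2) * I.len)
    rw [e1, e2]
    apply ENNReal.tsum_le_tsum
    intro I
    by_cases hI : I ∈ {I : DI | I.carrier ⊆ J'.carrier}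
    · rw [Set.indicator_of_mem hI]
      by_cases hIE : I ∈ E ∧ (τ I).carrier ⊆ J.carrier
      · have hxI : x I = 1 := if_pos hIE
        have hmem : I ∈ {I : DI | I ∈ E ∧ I.carrier ⊆ J'.carrier} := ⟨hIE.1, hI⟩
        rw [hxI, Set.indicator_of_mem hmem]
        norm_num
      · have hxI : x I = 0 := if_neg hIE
        rw [hxI]
        simp
    · rw [Set.indicator_of_notMem hI]
      exact zero_le
  calc carlesonSum (τ '' E) J / J.len ≤ bmoSq y := h1
    _ ≤ C * bmoSq x := hT x y hcompat
    _ ≤ C * carlesonConst E := mul_le_mul_right h2 C
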